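/- arXiv:1506.00811 — 3 statements merged into one kernel-verified Lean document; each statement's English description precedes it below -/
import Mathlib

section
/- Let K be a field of characteristic zero and let G be an ANC group (a finite nilpotent group all of whose abelian normal subgroups are cyclic). Then there exist a nonzero finite-dimensional K-vector space V and a subgroup H of GL(V) such that H is isomorphic to G as an abstract group and H is irreducible, i.e. the only K-subspaces of V invariant under every element of H are 0 and V. -/
open Polynomial

universe u v

private lemma normal_meets_center {G : Type*} [Group G] [Group.IsNilpotent G]
    (N : Subgroup G) (hNorm : N.Normal) (hN : N ≠ ⊥) :
    ∃ x : G, x ∈ N ∧ x ∈ Subgroup.center G ∧ x ≠ 1 := by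
  classical
  obtain ⟨c, hc⟩ := Group.IsNilpotent.nilpotent (G := G)
  have hex : ∃ i, N ⊓ Subgroup.upperCentralSeries G i ≠ ⊥ := ⟨c, by rwa [hc, inf_top_eq]⟩
  have hi := Nat.find_spec hex
  have hi0 : Nat.find hex ≠ 0 := by
    intro h
    rw [h, Subgroup.upperCentralSeries_zero, inf_bot_eq] at hi
    exact hi rfl
  obtain ⟨j, hij⟩ : ∃ j, Nat.find hex = j + 1 :=
    ⟨Nat.find hex - 1, (Nat.succ_pred_eq_of_pos (Nat.pos_of_ne_zero hi0)).symm⟩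
  have hprev : N ⊓ Subgroup.upperCentralSeries G j = ⊥ := by
    by_contra h
    exact Nat.find_min hex (by omega) h
  rw [hij, Subgroup.ne_bot_iff_exists_ne_one] at hi
  obtain ⟨⟨x, hx⟩, hxne⟩ := hi
  have hxne' : x ≠ 1 := by
    intro h
    exact hxne (Subtype.ext h)
  have hxN : x ∈ N := hx.1
  have hxU : x ∈ upperCentralSeries G (j + 1) := hx.2
  refine ⟨x, hxN, Subgroup.mem_center_iff.mpr fun g => ?_, hxne'⟩
  have hcom : x * g * x⁻¹ * g⁻¹ ∈ upperCentralSeries G j :=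
    (mem_upperCentralSeries_succ_iff).mp hxU g
  have hcomN : x * g * x⁻¹ * g⁻¹ ∈ N := by
    have h1 : g * x⁻¹ * g⁻¹ ∈ N := hNorm.conj_mem _ (N.inv_mem hxN) g
    have h2 := N.mul_mem hxN h1
    simpa [mul_assoc] using h2
  have hmem : x * g * x⁻¹ * g⁻¹ ∈ N ⊓ Subgroup.upperCentralSeries G j := ⟨hcomN, hcom⟩
  rw [hprev, Subgroup.mem_bot] at hmem
  have h3 : x * g * x⁻¹ = g := mul_inv_eq_one.mp hmem
  calc g * x = (x * g * x⁻¹) * x := by rw [h3]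
  _ = x * g := by group

private theorem aux_rep (K : Type u) [Field K] [CharZero K]
    (G : Type u) [Group G] [Finite G] [Group.IsNilpotent G]
    (hANC : ∀ A : Subgroup G, A.Normal → (∀ x y : ↥A, x * y = y * x) → IsCyclic ↥A) :
    ∃ (d : ℕ) (H : Subgroup (Matrix.GeneralLinearGroup (Fin d) K)),
      0 < d ∧ Nonempty (G ≃* ↥H) ∧
      ∀ U : Submodule K (Fin d → K),
        (∀ g ∈ H, ∀ v ∈ U, Matrix.mulVec (g : Matrix (Fin d) (Fin d) K) v ∈ U) →
        U = ⊥ ∨ U = ⊤ := by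
  classical
  cases nonempty_fintype G
  haveI : NeZero ((Fintype.card G : K)) := ⟨Nat.cast_ne_zero.mpr Fintype.card_ne_zero⟩
  haveI hZc : IsCyclic (Subgroup.center G) :=
    hANC _ inferInstance fun x y => Subtype.ext (Subgroup.mem_center_iff.mp y.2 x)
  obtain ⟨z₀, hz₀⟩ := IsCyclic.exists_generator (α := Subgroup.center G)
  set z : G := (z₀ : G) with hzdef
  have hzcen : z ∈ Subgroup.center G := z₀.2
  set n : ℕ := orderOf z with hndef
  have hn0 : 0 < n := orderOf_pos z
  have hzn : z ^ n = 1 := pow_orderOf_eq_one z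
  -- every nontrivial normal subgroup contains z ^ d for a proper divisor d of n
  have key : ∀ N : Subgroup G, N.Normal → N ≠ ⊥ →
      ∃ d : ℕ, 0 < d ∧ d < n ∧ d ∣ n ∧ z ^ d ∈ N := by
    intro N hNorm hN
    obtain ⟨x, hxN, hxC, hx1⟩ := normal_meets_center N hNorm hN
    obtain ⟨m, hzm'⟩ := hz₀ ⟨x, hxC⟩
    have hzm : z ^ m = x := by
      have := congrArg (Subtype.val) hzm'
      simpa using this
    set d : ℕ := Int.gcd m (n : ℤ) with hddef
    have hdn : d ∣ n := by exact_mod_cast Int.gcd_dvd_right (a := m) (b := (n : ℤ))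
    have hd0 : 0 < d := Int.gcd_pos_iff.mpr (Or.inr (by exact_mod_cast hn0.ne'))
    have hnm : ¬ ((n : ℤ) ∣ m) := by
      intro hdvd
      apply hx1
      rw [← hzm]
      exact orderOf_dvd_iff_zpow_eq_one.mp hdvd
    have hdltn : d < n := by
      rcases lt_or_eq_of_le (Nat.le_of_dvd hn0 hdn) with h | h
      · exact h
      · exfalso
        apply hnm
        have hdv : (d : ℤ) ∣ m := Int.gcd_dvd_left _ _
        rw [h] at hdv
        exact hdv
    refine ⟨d, hd0, hdltn, hdn, ?_⟩
    have hbezout : (d : ℤ) = m * Int.gcdA m n + n * Int.gcdB m n := Int.gcd_eq_gcd_ab m n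
    have hzdm : z ^ (d : ℤ) = (z ^ m) ^ Int.gcdA m n * (z ^ (n : ℤ)) ^ Int.gcdB m n := by
      rw [← zpow_mul, ← zpow_mul, ← zpow_add, ← hbezout]
    have hmem : z ^ (d : ℤ) ∈ N := by
      rw [hzdm, hzm]
      refine N.mul_mem (N.zpow_mem hxN _) ?_
      have h1 : z ^ (n : ℤ) = 1 := by
        rw [zpow_natCast]
        exact hzn
      rw [h1, one_zpow]
      exact N.one_mem
    rwa [zpow_natCast] at hmem
  -- the monoid algebra
  set A : Type u := MonoidAlgebra K G with hAdef
  let zb : A := MonoidAlgebra.of K G z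
  have hzb_comm : ∀ a : A, Commute (MonoidAlgebra.of K G z) a := by
    intro a
    induction a using MonoidAlgebra.induction_on with
    | of g =>
      show _ * _ = _ * _
      rw [MonoidAlgebra.of_apply, MonoidAlgebra.of_apply, MonoidAlgebra.single_mul_single,
        MonoidAlgebra.single_mul_single, one_mul, Subgroup.mem_center_iff.mp hzcen g]
    | add f g hf hg => exact hf.add_right hg
    | smul r f hf => exact hf.smul_right r
  have haeval_comm : ∀ (p : K[X]) (a : A), Commute (aeval zb p) a := by
    intro p a
    induction p using Polynomial.induction_on' with
    | add p q hp hq => rw [map_add]; exact hp.add_left hq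
    | monomial i c =>
      rw [aeval_monomial]
      exact (show Commute ((algebraMap K A) c) a from Algebra.commutes c a).mul_left
        ((hzb_comm a).pow_left i)
  have hzbn : zb ^ n = 1 := by
    show (MonoidAlgebra.of K G z) ^ n = 1
    rw [← map_pow, hzn, map_one]
  -- polynomials
  have hXn_ne : ((X : K[X]) ^ n - 1) ≠ 0 := by
    have h := monic_X_pow_sub_C (1 : K) hn0.ne'
    rw [C_1] at h
    exact h.ne_zero
  have hsq : Squarefree ((X : K[X]) ^ n - 1) := by
    have hs : ((X : K[X]) ^ n - C (1 : K)).Separable :=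
      separable_X_pow_sub_C (1 : K) (by exact_mod_cast hn0.ne') one_ne_zero
    rw [C_1] at hs
    exact hs.squarefree
  obtain ⟨f, hfmonic, hfirr, hfdvd_cyc⟩ :=
    (Polynomial.cyclotomic n K).exists_monic_irreducible_factor
      (Polynomial.not_isUnit_of_natDegree_pos _
        (by rw [Polynomial.natDegree_cyclotomic]; exact Nat.totient_pos.mpr hn0))
  have hfdvd : f ∣ (X : K[X]) ^ n - 1 :=
    hfdvd_cyc.trans (Polynomial.cyclotomic.dvd_X_pow_sub_one n K)
  have hcop : ∀ d : ℕ, 0 < d → d < n → d ∣ n → IsCoprime f ((X : K[X]) ^ d - 1) := by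
    intro d hd0 hdn hddvd
    rw [hfirr.coprime_iff_not_dvd]
    intro hfd
    have h2 : f * f ∣ ((X : K[X]) ^ d - 1) * Polynomial.cyclotomic n K := mul_dvd_mul hfd hfdvd_cyc
    have h3 : ((X : K[X]) ^ d - 1) * Polynomial.cyclotomic n K ∣ (X : K[X]) ^ n - 1 :=
      Polynomial.X_pow_sub_one_mul_cyclotomic_dvd_X_pow_sub_one_of_dvd K
        (Nat.mem_properDivisors.mpr ⟨hddvd, hdn⟩)
    exact hfirr.not_isUnit (hsq f (h2.trans h3))
  obtain ⟨h, hfh⟩ := hfdvd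
  have hfne : f ≠ 0 := hfirr.ne_zero
  have hhne : h ≠ 0 := by
    rintro rfl
    rw [mul_zero] at hfh
    exact hXn_ne hfh
  have hdegh : h.natDegree < n := by
    have hdeq := congrArg Polynomial.natDegree hfh
    rw [Polynomial.natDegree_mul hfne hhne] at hdeq
    have hn' : ((X : K[X]) ^ n - 1).natDegree = n := by
      have : ((X : K[X]) ^ n - C (1:K)).natDegree = n := Polynomial.natDegree_X_pow_sub_C
      rwa [C_1] at this
    have hfpos : 0 < f.natDegree := hfirr.natDegree_pos
    omega
  -- the nonzero element h(zb)
  have hz_ne : aeval zb h ≠ 0 := by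
    intro h0
    have hexp : aeval zb h = ∑ i ∈ Finset.range n, h.coeff i • zb ^ i :=
      Polynomial.aeval_eq_sum_range' hdegh _
    have hsingle : ∀ i : ℕ, h.coeff i • zb ^ i
        = MonoidAlgebra.single (z ^ i) (h.coeff i) := by
      intro i
      show h.coeff i • (MonoidAlgebra.of K G z) ^ i = _
      rw [← map_pow, MonoidAlgebra.of_apply, MonoidAlgebra.smul_single', mul_one]
    rw [hexp] at h0
    simp only [hsingle] at h0
    have h0' : (∑ x ∈ Finset.range n, Finsupp.single (z ^ x) (h.coeff x) : G →₀ K) = 0 := by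
      have := congrArg MonoidAlgebra.coeff h0
      rw [MonoidAlgebra.coeff_sum, MonoidAlgebra.coeff_zero] at this
      simpa only [MonoidAlgebra.coeff_single] using this
    have happ := DFunLike.congr_fun h0' (z ^ h.natDegree)
    rw [Finset.sum_apply'] at happ
    rw [Finset.sum_eq_single h.natDegree] at happ
    · rw [Finsupp.single_eq_same] at happ
      exact Polynomial.leadingCoeff_ne_zero.mpr hhne happ
    · intro i hi hine
      rw [Finsupp.single_apply_eq_zero]
      intro hzz
      exact absurd (pow_injOn_Iio_orderOf (by simpa using Finset.mem_range.mp hi)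
        (by simpa using hdegh) hzz.symm) hine
    · intro hmem
      exact absurd (Finset.mem_range.mpr (by omega)) hmem
  -- the submodule W, annihilator of f(zb)
  set fz : A := aeval zb f with hfzdef
  let W : Submodule A A :=
    { carrier := {x : A | x * fz = 0}
      add_mem' := by
        intro a b ha hb
        simp only [Set.mem_setOf_eq] at *
        rw [add_mul, ha, hb, add_zero]
      zero_mem' := by simp
      smul_mem' := by
        intro c x hx
        simp only [Set.mem_setOf_eq, smul_eq_mul] at *
        rw [mul_assoc, hx, mul_zero] }
  have hWmem : ∀ x : A, x ∈ W ↔ x * fz = 0 := fun x => Iff.rfl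
  have hhzW : aeval zb h ∈ W := by
    rw [hWmem, ← map_mul, mul_comm h f, ← hfh, map_sub, map_one, map_pow, aeval_X, hzbn, sub_self]
  have hWne : W ≠ ⊥ := by
    intro hW
    rw [hW, Submodule.mem_bot] at hhzW
    exact hz_ne hhzW
  -- simple submodule of W
  haveI : IsSemisimpleModule A A := inferInstance
  rcases IsSemisimpleModule.eq_bot_or_exists_simple_le W with hW0 | ⟨V, hVW, hVsimple⟩
  · exact absurd hW0 hWne
  haveI := hVsimple
  have hatom : IsAtom V := isSimpleModule_iff_isAtom.mp hVsimple
  -- V as a K-vector space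
  haveI : FiniteDimensional K A :=
    Module.Finite.of_basis (MonoidAlgebra.basis G K)
  set XV : Submodule K A := V.restrictScalars K with hXVdef
  have hXmem : ∀ x : A, x ∈ XV ↔ x ∈ V := fun x => Submodule.restrictScalars_mem K V x
  have hVne : ∃ x : A, x ∈ V ∧ x ≠ 0 := by
    have := hatom.1
    rw [Submodule.ne_bot_iff] at this
    exact this.imp fun x hx => ⟨hx.1, hx.2⟩
  haveI : Nontrivial XV := by
    obtain ⟨x, hxV, hx0⟩ := hVne
    exact ⟨⟨x, (hXmem x).mpr hxV⟩, 0, by simp [hx0]⟩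
  set d : ℕ := Module.finrank K XV with hddef
  have hd0 : 0 < d := Module.finrank_pos
  let eqv : XV ≃ₗ[K] (Fin d → K) := (Module.finBasis K XV).equivFun
  -- the action of G on XV
  have hractmem : ∀ (g : G) (v : XV), MonoidAlgebra.of K G g * (v : A) ∈ XV := by
    intro g v
    rw [hXmem]
    have : MonoidAlgebra.of K G g * (v : A) = (MonoidAlgebra.of K G g) • (v : A) := rfl
    rw [this]
    exact V.smul_mem _ ((hXmem _).mp v.2)
  let ract : G → (XV →ₗ[K] XV) := fun g =>
    { toFun := fun v => ⟨MonoidAlgebra.of K G g * (v : A), hractmem g v⟩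
      map_add' := by
        intro v w
        apply Subtype.ext
        show MonoidAlgebra.of K G g * ((v : A) + (w : A)) = _
        rw [mul_add]
        rfl
      map_smul' := by
        intro c v
        apply Subtype.ext
        show MonoidAlgebra.of K G g * (c • (v : A)) = c • (MonoidAlgebra.of K G g * (v : A))
        rw [Algebra.mul_smul_comm] }
  have ract_apply : ∀ (g : G) (v : XV), (ract g v : A) = MonoidAlgebra.of K G g * (v : A) :=
    fun g v => rfl
  have ract_mul : ∀ (g g' : G) (v : XV), ract (g * g') v = ract g (ract g' v) := by
    intro g g' v
    apply Subtype.ext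
    rw [ract_apply, ract_apply, ract_apply, ← mul_assoc, ← map_mul]
  have ract_one : ∀ v : XV, ract 1 v = v := by
    intro v
    apply Subtype.ext
    rw [ract_apply, map_one, one_mul]
  let ρ₀ : G → (XV ≃ₗ[K] XV) := fun g =>
    LinearEquiv.ofLinear (ract g) (ract g⁻¹)
      (by
        apply LinearMap.ext
        intro v
        show ract g (ract g⁻¹ v) = v
        rw [← ract_mul, mul_inv_cancel, ract_one])
      (by
        apply LinearMap.ext
        intro v
        show ract g⁻¹ (ract g v) = v
        rw [← ract_mul, inv_mul_cancel, ract_one])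
  have ρ₀_apply : ∀ (g : G) (v : XV), ρ₀ g v = ract g v := fun g v => rfl
  -- conjugated action on Fin d → K
  let ρ₁ : G →* ((Fin d → K) ≃ₗ[K] (Fin d → K)) :=
    { toFun := fun g => (eqv.symm.trans (ρ₀ g)).trans eqv
      map_one' := by
        apply LinearEquiv.toLinearMap_injective
        apply LinearMap.ext
        intro w
        show eqv (ρ₀ 1 (eqv.symm w)) = w
        rw [ρ₀_apply, ract_one, eqv.apply_symm_apply]
      map_mul' := by
        intro g g'
        apply LinearEquiv.toLinearMap_injective
        apply LinearMap.ext
        intro w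
        show eqv (ρ₀ (g * g') (eqv.symm w)) = eqv (ρ₀ g (eqv.symm (eqv (ρ₀ g' (eqv.symm w)))))
        rw [eqv.symm_apply_apply, ρ₀_apply, ρ₀_apply, ρ₀_apply, ract_mul] }
  have ρ₁_apply : ∀ (g : G) (w : Fin d → K), ρ₁ g w = eqv (ρ₀ g (eqv.symm w)) :=
    fun g w => rfl
  -- the homomorphism into matrices
  let glEquiv := LinearMap.GeneralLinearGroup.generalLinearEquiv K (Fin d → K)
  let ψ : G →* Matrix.GeneralLinearGroup (Fin d) K :=
    ((Matrix.GeneralLinearGroup.toLin (n := Fin d) (R := K)).symm.toMonoidHom.comp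
      (glEquiv.symm.toMonoidHom.comp ρ₁))
  have hψ_val : ∀ g : G, Matrix.GeneralLinearGroup.toLin (ψ g) = glEquiv.symm (ρ₁ g) := by
    intro g
    show Matrix.GeneralLinearGroup.toLin
      ((Matrix.GeneralLinearGroup.toLin).symm (glEquiv.symm (ρ₁ g))) = _
    rw [MulEquiv.apply_symm_apply]
  have hmulVec : ∀ (g : G) (w : Fin d → K),
      Matrix.mulVec ((ψ g : Matrix (Fin d) (Fin d) K)) w = ρ₁ g w := by
    intro g w
    have h1 : Matrix.mulVec ((ψ g : Matrix (Fin d) (Fin d) K)) w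
        = Matrix.mulVecLin ((ψ g : Matrix (Fin d) (Fin d) K)) w := rfl
    rw [h1, ← Matrix.GeneralLinearGroup.coe_toLin, hψ_val]
    have h2 : (((glEquiv.symm (ρ₁ g)) : (Fin d → K) →ₗ[K] (Fin d → K))) w
        = ((glEquiv (glEquiv.symm (ρ₁ g))) : (Fin d → K) →ₗ[K] (Fin d → K)) w := by
      rw [LinearMap.GeneralLinearGroup.generalLinearEquiv_to_linearMap]
    rw [h2, MulEquiv.apply_symm_apply]
    rfl
  -- elements of the kernel act trivially
  have hker : ∀ g : G, ψ g = 1 → ∀ v : A, v ∈ V → MonoidAlgebra.of K G g * v = v := by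
    intro g hg v hv
    have h1 : ρ₁ g = 1 := by
      have h2 := congrArg (fun u => glEquiv (Matrix.GeneralLinearGroup.toLin u)) hg
      rw [hψ_val, MulEquiv.apply_symm_apply] at h2
      rw [h2, map_one, map_one]
    set vX : XV := ⟨v, (hXmem v).mpr hv⟩ with hvXdef
    have h3 : ρ₁ g (eqv vX) = eqv vX := by rw [h1]; rfl
    rw [ρ₁_apply, eqv.symm_apply_apply] at h3
    have h4 : ρ₀ g vX = vX := eqv.injective h3
    have h5 := congrArg (Subtype.val) h4
    rw [ρ₀_apply, ract_apply] at h5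
    exact h5
  -- injectivity
  have hψker : ψ.ker = ⊥ := by
    by_contra hne
    obtain ⟨d₀, hd₀0, hd₀n, hd₀dvd, hzd₀⟩ := key ψ.ker inferInstance hne
    have hact : ∀ v ∈ V, MonoidAlgebra.of K G (z ^ d₀) * v = v :=
      fun v hv => hker _ (MonoidHom.mem_ker.mp hzd₀) v hv
    obtain ⟨a, b, hab⟩ := hcop d₀ hd₀0 hd₀n hd₀dvd
    have hV0 : ∀ v ∈ V, v = (0 : A) := by
      intro v hv
      have h1 : aeval zb (a * f + b * ((X : K[X]) ^ d₀ - 1)) * v = v := by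
        rw [hab, map_one, one_mul]
      rw [map_add, map_mul, map_mul, add_mul] at h1
      have h2 : aeval zb a * fz * v = 0 := by
        rw [mul_assoc, (haeval_comm f v).eq, hVW hv, mul_zero]
      have h3 : aeval zb b * aeval zb ((X : K[X]) ^ d₀ - 1) * v = 0 := by
        have h4 : aeval zb ((X : K[X]) ^ d₀ - 1) = MonoidAlgebra.of K G (z ^ d₀) - 1 := by
          rw [map_sub, map_one, map_pow, aeval_X]
          show (MonoidAlgebra.of K G z) ^ d₀ - 1 = _
          rw [← map_pow]
        rw [mul_assoc, h4, sub_mul, one_mul, hact v hv, sub_self, mul_zero]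
      rw [h2, h3, add_zero] at h1
      exact h1.symm
    apply hatom.1
    rw [Submodule.eq_bot_iff]
    exact hV0
  have hψinj : Function.Injective ψ := (MonoidHom.ker_eq_bot_iff ψ).mp hψker
  -- irreducibility
  refine ⟨d, ψ.range, hd0, ⟨MonoidHom.ofInjective hψinj⟩, ?_⟩
  intro U hU
  set U₀ : Submodule K XV := U.comap (eqv : XV →ₗ[K] (Fin d → K)) with hU₀def
  have hU₀mem : ∀ v : XV, v ∈ U₀ ↔ eqv v ∈ U := fun v => Iff.rfl
  -- U₀ is stable under the action of any algebra element
  have hstable : ∀ (p : A) (x : A) (hx : x ∈ V), (⟨x, (hXmem x).mpr hx⟩ : XV) ∈ U₀ →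
      ∀ (h2 : p • x ∈ XV), (⟨p • x, h2⟩ : XV) ∈ U₀ := by
    intro p
    induction p using MonoidAlgebra.induction_on with
    | of g =>
      intro x hx hx0 h2
      have h3 : (⟨(MonoidAlgebra.of K G g) • x, h2⟩ : XV) = ract g ⟨x, (hXmem x).mpr hx⟩ :=
        Subtype.ext rfl
      rw [hU₀mem, h3]
      have h5 : eqv (ract g ⟨x, (hXmem x).mpr hx⟩) = ρ₁ g (eqv ⟨x, (hXmem x).mpr hx⟩) := by
        rw [ρ₁_apply, eqv.symm_apply_apply, ρ₀_apply]
      rw [h5, ← hmulVec]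
      exact hU (ψ g) ⟨g, rfl⟩ _ hx0
    | add p q hp hq =>
      intro x hx hx0 h2
      have hpx : p • x ∈ XV := by
        rw [hXmem]
        exact V.smul_mem p hx
      have hqx : q • x ∈ XV := by
        rw [hXmem]
        exact V.smul_mem q hx
      have h3 : (⟨(p + q) • x, h2⟩ : XV) = ⟨p • x, hpx⟩ + ⟨q • x, hqx⟩ :=
        Subtype.ext (add_smul p q x)
      rw [h3]
      exact U₀.add_mem (hp x hx hx0 hpx) (hq x hx hx0 hqx)
    | smul c p hp =>
      intro x hx hx0 h2
      have hpx : p • x ∈ XV := by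
        rw [hXmem]
        exact V.smul_mem p hx
      have h3 : (⟨(c • p) • x, h2⟩ : XV) = c • (⟨p • x, hpx⟩ : XV) :=
        Subtype.ext (smul_assoc c p x)
      rw [h3]
      exact U₀.smul_mem c (hp x hx hx0 hpx)
  -- build an A-submodule of A from U₀
  let V₁ : Submodule A A :=
    { carrier := {x : A | ∃ hx : x ∈ V, (⟨x, (hXmem x).mpr hx⟩ : XV) ∈ U₀}
      add_mem' := by
        rintro x y ⟨hx, hx0⟩ ⟨hy, hy0⟩
        refine ⟨V.add_mem hx hy, ?_⟩
        have h3 : (⟨x + y, (hXmem _).mpr (V.add_mem hx hy)⟩ : XV)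
            = ⟨x, (hXmem x).mpr hx⟩ + ⟨y, (hXmem y).mpr hy⟩ := Subtype.ext rfl
        rw [h3]
        exact U₀.add_mem hx0 hy0
      zero_mem' := by
        refine ⟨V.zero_mem, ?_⟩
        have h3 : (⟨(0 : A), (hXmem _).mpr V.zero_mem⟩ : XV) = 0 := Subtype.ext rfl
        rw [h3]
        exact U₀.zero_mem
      smul_mem' := by
        rintro p x ⟨hx, hx0⟩
        exact ⟨V.smul_mem p hx, hstable p x hx hx0 ((hXmem _).mpr (V.smul_mem p hx))⟩ }
  have hV₁le : V₁ ≤ V := fun x hx => hx.1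
  have hmap : Submodule.map (eqv : XV →ₗ[K] (Fin d → K)) U₀ = U := by
    apply le_antisymm
    · rintro w ⟨v, hv, rfl⟩
      exact hv
    · intro w hw
      refine ⟨eqv.symm w, ?_, eqv.apply_symm_apply w⟩
      show eqv (eqv.symm w) ∈ U
      rw [eqv.apply_symm_apply]
      exact hw
  rcases (IsAtom.le_iff hatom).mp hV₁le with hbot | htop
  · -- U₀ = ⊥
    left
    have hU₀bot : U₀ = ⊥ := by
      rw [Submodule.eq_bot_iff]
      rintro ⟨x, hxX⟩ hxU
      have hxV : x ∈ V := (hXmem x).mp hxX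
      have : x ∈ V₁ := ⟨hxV, hxU⟩
      rw [hbot, Submodule.mem_bot] at this
      subst this
      rfl
    rw [← hmap, hU₀bot, Submodule.map_bot]
  · -- U₀ = ⊤
    right
    have hU₀top : U₀ = ⊤ := by
      rw [Submodule.eq_top_iff']
      rintro ⟨x, hxX⟩
      have hxV : x ∈ V := (hXmem x).mp hxX
      have hx1 : x ∈ V₁ := htop ▸ hxV
      exact hx1.2
    rw [← hmap, hU₀top, Submodule.map_top, LinearEquiv.range]

private theorem aux_glue (K : Type u) [Field K] [CharZero K]
    (G : Type v) [Group G] [Finite G] [Group.IsNilpotent G]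
    (hANC : ∀ A : Subgroup G, A.Normal → (∀ x y : ↥A, x * y = y * x) → IsCyclic ↥A) :
    ∃ (d : ℕ) (H : Subgroup (Matrix.GeneralLinearGroup (Fin d) K)),
      0 < d ∧ Nonempty (G ≃* ↥H) ∧
      ∀ U : Submodule K (Fin d → K),
        (∀ g ∈ H, ∀ v ∈ U, Matrix.mulVec (g : Matrix (Fin d) (Fin d) K) v ∈ U) →
        U = ⊥ ∨ U = ⊤ := by
  -- move `G` into the universe of `K` using `Shrink`
  let e : Shrink.{u} G ≃* G := Shrink.mulEquiv
  haveI : Finite (Shrink.{u} G) := Finite.of_equiv G (equivShrink.{u} G)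
  haveI : Group.IsNilpotent (Shrink.{u} G) := nilpotent_of_mulEquiv e.symm
  have hANC' : ∀ A : Subgroup (Shrink.{u} G), A.Normal →
      (∀ x y : ↥A, x * y = y * x) → IsCyclic ↥A := by
    intro A hN hcomm
    have hNmap : (A.map e.toMonoidHom).Normal :=
      Subgroup.Normal.map hN e.toMonoidHom e.surjective
    have hcommMap : ∀ x y : ↥(A.map e.toMonoidHom), x * y = y * x := by
      rintro ⟨x, hx⟩ ⟨y, hy⟩
      obtain ⟨x₀, hx₀, rfl⟩ := hx
      obtain ⟨y₀, hy₀, rfl⟩ := hy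
      have h1 := hcomm ⟨x₀, hx₀⟩ ⟨y₀, hy₀⟩
      have h2 : x₀ * y₀ = y₀ * x₀ := congrArg Subtype.val h1
      apply Subtype.ext
      show e.toMonoidHom x₀ * e.toMonoidHom y₀ = e.toMonoidHom y₀ * e.toMonoidHom x₀
      rw [← map_mul, ← map_mul, h2]
    haveI := hANC _ hNmap hcommMap
    exact isCyclic_of_surjective
      (A.equivMapOfInjective e.toMonoidHom e.injective).symm.toMonoidHom
      (MulEquiv.surjective _)
  obtain ⟨d, H, hd, ⟨iso⟩, hirr⟩ := aux_rep K (Shrink.{u} G) hANC'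
  exact ⟨d, H, hd, ⟨e.symm.trans iso⟩, hirr⟩

/-- Every ANC group (a finite nilpotent group all of whose abelian normal
subgroups are cyclic) is isomorphic to an irreducible linear group over any field `K` of
characteristic zero, i.e. to a subgroup `H` of `GL_d(K)` (for some `d ≥ 1`) such that the only
`K`-subspaces of `K^d` invariant under every element of `H` are `0` and everything. -/
theorem stmt_0 (K : Type*) [Field K] [CharZero K]
    (G : Type*) [Group G] [Finite G] [Group.IsNilpotent G]
    (hANC : ∀ A : Subgroup G, A.Normal → (∀ x y : ↥A, x * y = y * x) → IsCyclic ↥A) :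
    ∃ (d : ℕ) (H : Subgroup (Matrix.GeneralLinearGroup (Fin d) K)),
      0 < d ∧ Nonempty (G ≃* ↥H) ∧
      ∀ U : Submodule K (Fin d → K),
        (∀ g ∈ H, ∀ v ∈ U, Matrix.mulVec (g : Matrix (Fin d) (Fin d) K) v ∈ U) →
        U = ⊥ ∨ U = ⊤ := by
  exact aux_glue K G hANC
end

section
/- Let K be a subfield of the field ℚ̄ of algebraic numbers, let n ∈ ℕ, and let p be a prime dividing n. Then [E_nK : E_{n/p}K] = p if and only if p² divides n and p divides n / c_K(n) (note that c_K(n) divides n). -/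
noncomputable section

/-- The primitive `n`-th root of unity `exp(2πi/n)` in `ℂ`. -/
def zetaC (n : ℕ) : ℂ := Complex.exp (2 * Real.pi * Complex.I / n)

/-- The `n`-th cyclotomic field `E_n = ℚ(ζ_n)`, as an intermediate field of `ℂ/ℚ`. -/
def Ecyc (n : ℕ) : IntermediateField ℚ ℂ := IntermediateField.adjoin ℚ {zetaC n}

/-- Writing `n = 2^j * m` with `m` odd, `E_n^+ = ℚ(ζ_{2^j} + ζ_{2^j}⁻¹)·E_m` if `j ≥ 3`,
and `E_n^+ = E_m` if `j ≤ 2`. -/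
def EcycP (n : ℕ) : IntermediateField ℚ ℂ :=
  if 3 ≤ n.factorization 2 then
    IntermediateField.adjoin ℚ
        {zetaC (2 ^ n.factorization 2) + (zetaC (2 ^ n.factorization 2))⁻¹} ⊔
      Ecyc (n / 2 ^ n.factorization 2)
  else Ecyc (n / 2 ^ n.factorization 2)

/-- Writing `n = 2^j * m` with `m` odd, `E_n^- = ℚ(ζ_{2^j} - ζ_{2^j}⁻¹)·E_m` if `j ≥ 3`,
and `E_n^- = E_m` if `j ≤ 2`. -/
def EcycM (n : ℕ) : IntermediateField ℚ ℂ :=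
  if 3 ≤ n.factorization 2 then
    IntermediateField.adjoin ℚ
        {zetaC (2 ^ n.factorization 2) - (zetaC (2 ^ n.factorization 2))⁻¹} ⊔
      Ecyc (n / 2 ^ n.factorization 2)
  else Ecyc (n / 2 ^ n.factorization 2)

/-- The gcd of a set of natural numbers (`0` if the set is empty), realised as the
largest common divisor. -/
def setGcd (S : Set ℕ) : ℕ := sSup {g : ℕ | ∀ s ∈ S, g ∣ s}

/-- `𝔇_K(n) = {d ∈ ℕ : K ∩ E_n ⊆ E_d}` (with `d` positive). -/
def Dset (K : IntermediateField ℚ ℂ) (n : ℕ) : Set ℕ :=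
  {d | 0 < d ∧ K ⊓ Ecyc n ≤ Ecyc d}

/-- `𝔇_K^+(n) = {d ∈ ℕ : K ∩ E_n ⊆ E_d^+}` (with `d` positive). -/
def DsetP (K : IntermediateField ℚ ℂ) (n : ℕ) : Set ℕ :=
  {d | 0 < d ∧ K ⊓ Ecyc n ≤ EcycP d}

/-- `𝔇_K^-(n) = {d ∈ ℕ : K ∩ E_n ⊆ E_d^-}` (with `d` positive). -/
def DsetM (K : IntermediateField ℚ ℂ) (n : ℕ) : Set ℕ :=
  {d | 0 < d ∧ K ⊓ Ecyc n ≤ EcycM d}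

/-- `c_K(n) = gcd 𝔇_K(n)`. -/
def cK (K : IntermediateField ℚ ℂ) (n : ℕ) : ℕ := setGcd (Dset K n)

/-- `c_K^+(n) = gcd 𝔇_K^+(n)`. -/
def cKP (K : IntermediateField ℚ ℂ) (n : ℕ) : ℕ := setGcd (DsetP K n)

/-- `c_K^-(n) = gcd 𝔇_K^-(n)`. -/
def cKM (K : IntermediateField ℚ ℂ) (n : ℕ) : ℕ := setGcd (DsetM K n)

/-- The compositum `F·A`, viewed as a field extension of `A`. -/
def relField (F A : IntermediateField ℚ ℂ) : IntermediateField ↥A ℂ :=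
  IntermediateField.extendScalars (le_sup_right : A ≤ F ⊔ A)

/-- The relative degree `[F·A : A]`. -/
def relDeg (F A : IntermediateField ℚ ℂ) : ℕ := Module.finrank ↥A ↥(relField F A)

/-- The Galois group `Gal(F·A / A)`. -/
abbrev RelGal (F A : IntermediateField ℚ ℂ) :=
  ↥(relField F A) ≃ₐ[↥A] ↥(relField F A)

end


open Polynomial IntermediateField

section Aux

lemma zetaC_prim {n : ℕ} (hn : n ≠ 0) : IsPrimitiveRoot (zetaC n) n :=
  Complex.isPrimitiveRoot_exp n hn

lemma zetaC_ne_zero (n : ℕ) : zetaC n ≠ 0 := Complex.exp_ne_zero _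

lemma zetaC_pow_div {d n : ℕ} (hn : n ≠ 0) (h : d ∣ n) : zetaC n ^ (n / d) = zetaC d := by
  have hd : d ≠ 0 := by rintro rfl; exact hn (Nat.zero_dvd.mp h)
  rw [zetaC, zetaC, ← Complex.exp_nat_mul]
  congr 1
  have hdc : (d:ℂ) ≠ 0 := Nat.cast_ne_zero.2 hd
  have hnc : (n:ℂ) ≠ 0 := Nat.cast_ne_zero.2 hn
  have : ((n / d : ℕ) : ℂ) = (n : ℂ) / d := by
    rw [Nat.cast_div h hdc]
  rw [this]
  field_simp

lemma zetaC_mem (n : ℕ) : zetaC n ∈ Ecyc n := IntermediateField.subset_adjoin _ _ rfl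

lemma Ecyc_mono {d n : ℕ} (hn : n ≠ 0) (h : d ∣ n) : Ecyc d ≤ Ecyc n := by
  rw [Ecyc, IntermediateField.adjoin_le_iff, Set.singleton_subset_iff]
  rw [← zetaC_pow_div hn h]
  exact pow_mem (zetaC_mem n) _

lemma zetaC_integral (n : ℕ) : IsIntegral ℚ (zetaC n) := by
  rcases eq_or_ne n 0 with rfl | hn
  · have : zetaC 0 = 1 := by simp [zetaC]
    rw [this]; exact isIntegral_one
  · exact ((zetaC_prim hn).isIntegral (Nat.pos_of_ne_zero hn)).tower_top

lemma minpoly_zetaC {n : ℕ} (hn : n ≠ 0) : minpoly ℚ (zetaC n) = cyclotomic n ℚ :=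
  (cyclotomic_eq_minpoly_rat (zetaC_prim hn) (Nat.pos_of_ne_zero hn)).symm

lemma finrank_Ecyc {n : ℕ} (hn : n ≠ 0) : Module.finrank ℚ (Ecyc n) = n.totient := by
  have h := IntermediateField.adjoin.finrank (zetaC_integral n)
  rw [minpoly_zetaC hn, natDegree_cyclotomic] at h
  exact h

instance instFDEcyc (n : ℕ) : FiniteDimensional ℚ (Ecyc n) :=
  IntermediateField.adjoin.finiteDimensional (zetaC_integral n)

lemma relDeg_eq_relfinrank (F A : IntermediateField ℚ ℂ) :
    relDeg F A = relfinrank A (F ⊔ A) :=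
  (relfinrank_eq_finrank_of_le le_sup_right).symm

lemma extendScalars_sup_adjoin (x : ℂ) (A : IntermediateField ℚ ℂ) :
    extendScalars (le_sup_right : A ≤ IntermediateField.adjoin ℚ {x} ⊔ A)
      = IntermediateField.adjoin ↥A {x} := by
  apply restrictScalars_injective ℚ
  change IntermediateField.adjoin ℚ {x} ⊔ A = _
  erw [restrictScalars_adjoin_eq_sup (K := A) (S := {x})]
  rw [sup_comm]

lemma relfinrank_sup_adjoin (x : ℂ) (hx : IsIntegral ℚ x) (A : IntermediateField ℚ ℂ) :
    relfinrank A (IntermediateField.adjoin ℚ {x} ⊔ A) = (minpoly ↥A x).natDegree := by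
  rw [relfinrank_eq_finrank_of_le (le_sup_right : A ≤ IntermediateField.adjoin ℚ {x} ⊔ A),
    extendScalars_sup_adjoin]
  exact IntermediateField.adjoin.finrank hx.tower_top

lemma relfinrank_adjoin_of_le (x : ℂ) (hx : IsIntegral ℚ x) {A : IntermediateField ℚ ℂ}
    (hA : A ≤ IntermediateField.adjoin ℚ {x}) :
    relfinrank A (IntermediateField.adjoin ℚ {x}) = (minpoly ↥A x).natDegree := by
  conv_lhs => rw [← sup_eq_left.mpr hA]
  exact relfinrank_sup_adjoin x hx A

lemma minpoly_natDegree_le_of_le {A B : IntermediateField ℚ ℂ} (h : A ≤ B) (x : ℂ)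
    (hx : IsIntegral ℚ x) : (minpoly ↥B x).natDegree ≤ (minpoly ↥A x).natDegree := by
  have hxA : IsIntegral ↥A x := hx.tower_top
  set f := (IntermediateField.inclusion h).toRingHom with hf
  have hcomp : (algebraMap ↥B ℂ).comp f = algebraMap ↥A ℂ := by
    ext a; rfl
  have hmon : ((minpoly ↥A x).map f).Monic := (minpoly.monic hxA).map f
  have h0 : Polynomial.aeval x ((minpoly ↥A x).map f) = 0 := by
    rw [Polynomial.aeval_def, Polynomial.eval₂_map, hcomp, ← Polynomial.aeval_def, minpoly.aeval]
  have hle := minpoly.min (A := ↥B) x hmon h0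
  have := Polynomial.natDegree_le_natDegree hle
  rwa [(minpoly.monic hxA).natDegree_map] at this

theorem minpoly_natDegree_inf (x : ℂ) (hx : IsIntegral ℚ x)
    (hroots : ∀ r : ℂ, Polynomial.aeval r (minpoly ℚ x) = 0 → r ∈ IntermediateField.adjoin ℚ {x})
    (L : IntermediateField ℚ ℂ) :
    (minpoly ↥L x).natDegree = (minpoly ↥(IntermediateField.adjoin ℚ {x} ⊓ L) x).natDegree := by
  set E := IntermediateField.adjoin ℚ {x} with hE
  set M := E ⊓ L with hM
  refine le_antisymm (minpoly_natDegree_le_of_le (inf_le_right : M ≤ L) x hx) ?_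
  have hxL : IsIntegral ↥L x := hx.tower_top
  set p := minpoly ↥L x with hp
  have hpm : p.Monic := minpoly.monic hxL
  set P := p.map (algebraMap ↥L ℂ) with hP
  have hPm : P.Monic := hpm.map _
  have hdvd : P ∣ (minpoly ℚ x).map (algebraMap ℚ ℂ) := by
    have h1 : p ∣ (minpoly ℚ x).map (algebraMap ℚ ↥L) :=
      minpoly.dvd _ _ (by rw [Polynomial.aeval_map_algebraMap]; exact minpoly.aeval ℚ x)
    have h2 := Polynomial.map_dvd (algebraMap ↥L ℂ) h1
    rwa [Polynomial.map_map, ← IsScalarTower.algebraMap_eq] at h2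
  have hProots : ∀ r ∈ P.roots, r ∈ E := by
    intro r hr
    apply hroots
    obtain ⟨q, hq⟩ := hdvd
    have hr0 : P.eval r = 0 := Polynomial.isRoot_of_mem_roots hr
    have : ((minpoly ℚ x).map (algebraMap ℚ ℂ)).eval r = 0 := by
      rw [hq, Polynomial.eval_mul, hr0, zero_mul]
    rwa [Polynomial.eval_map, ← Polynomial.aeval_def] at this
  have hsplit : P.Splits := IsAlgClosed.splits P
  have hPeq : P = (P.roots.map fun a => X - C a).prod :=
    hsplit.eq_prod_roots_of_monic hPm
  have hcoeffE : ∀ i, P.coeff i ∈ E := by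
    intro i
    set s : Multiset ↥E := P.roots.pmap (fun r hr => (⟨r, hProots r hr⟩ : ↥E)) (fun r hr => hr)
      with hs
    have hmap : Multiset.map (fun r : ↥E => (X : ℂ[X]) - C (r : ℂ)) s
        = P.roots.map fun a => X - C a := by
      rw [hs, Multiset.map_pmap]
      exact Multiset.pmap_eq_map _ (fun a : ℂ => (X : ℂ[X]) - C a) P.roots (fun r hr => hr)
    set Q : Polynomial ↥E := (s.map fun r : ↥E => (X : (↥E)[X]) - C r).prod with hQ
    have hPQ : Q.map (algebraMap ↥E ℂ) = P := by
      rw [hQ, Polynomial.map_multiset_prod, Multiset.map_map]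
      rw [hPeq, ← hmap]
      congr 1
      apply Multiset.map_congr rfl
      intro r _
      simp [Polynomial.map_sub]
    rw [← hPQ, Polynomial.coeff_map]
    exact (Q.coeff i).2
  have hcoeffL : ∀ i, P.coeff i ∈ L := by
    intro i
    rw [hP, Polynomial.coeff_map]
    exact (p.coeff i).2
  have hlift : P ∈ Polynomial.lifts (algebraMap ↥M ℂ) := by
    rw [Polynomial.lifts_iff_coeff_lifts]
    intro i
    exact ⟨⟨P.coeff i, hcoeffE i, hcoeffL i⟩, rfl⟩
  obtain ⟨q, hq1, hq2, hq3⟩ := Polynomial.lifts_and_degree_eq_and_monic hlift hPm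
  have haq : Polynomial.aeval x q = 0 := by
    rw [Polynomial.aeval_def, ← Polynomial.eval_map, hq1, hP, Polynomial.eval_map,
      ← Polynomial.aeval_def]
    exact minpoly.aeval ↥L x
  have hmin := minpoly.min (A := ↥M) x hq3 haq
  have hnd := Polynomial.natDegree_le_natDegree hmin
  have : q.natDegree = P.natDegree := Polynomial.natDegree_eq_of_degree_eq hq2
  rw [this] at hnd
  rwa [hP, hpm.natDegree_map] at hnd

lemma zetaC_roots {n : ℕ} (hn : n ≠ 0) :
    ∀ r : ℂ, Polynomial.aeval r (minpoly ℚ (zetaC n)) = 0 → r ∈ Ecyc n := by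
  intro r hr
  have h1 : minpoly ℚ (zetaC n) ∣ (X : ℚ[X]) ^ n - 1 := by
    apply minpoly.dvd
    simp [(zetaC_prim hn).pow_eq_one]
  obtain ⟨q, hq⟩ := h1
  have h2 : (Polynomial.aeval r) ((X : ℚ[X]) ^ n - 1) = 0 := by
    rw [hq, map_mul, hr, zero_mul]
  have hrn : r ^ n = 1 := by simpa [sub_eq_zero] using h2
  haveI : NeZero n := ⟨hn⟩
  obtain ⟨i, _, rfl⟩ := (zetaC_prim hn).eq_pow_of_pow_eq_one hrn
  exact pow_mem (zetaC_mem n) _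

lemma relfinrank_sup_Ecyc {n : ℕ} (hn : n ≠ 0) (L : IntermediateField ℚ ℂ) :
    relfinrank L (Ecyc n ⊔ L) = relfinrank (Ecyc n ⊓ L) (Ecyc n) := by
  have h1 := relfinrank_sup_adjoin (zetaC n) (zetaC_integral n) L
  have h2 := relfinrank_adjoin_of_le (zetaC n) (zetaC_integral n)
      (inf_le_left : Ecyc n ⊓ L ≤ Ecyc n)
  have h3 := minpoly_natDegree_inf (zetaC n) (zetaC_integral n) (zetaC_roots hn) L
  rw [show IntermediateField.adjoin ℚ {zetaC n} = Ecyc n from rfl] at h1 h2 h3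
  rw [h1, h3, ← h2]

lemma coprime_lcm_div {a b : ℕ} (ha : a ≠ 0) (hb : b ≠ 0) :
    Nat.Coprime (Nat.lcm a b / a) (Nat.lcm a b / b) := by
  set l := Nat.lcm a b with hl
  have hl0 : l ≠ 0 := Nat.lcm_ne_zero ha hb
  set g := Nat.gcd (l / a) (l / b) with hg
  have hg0 : g ≠ 0 := by
    rw [hg]
    intro h
    have h1 := Nat.eq_zero_of_gcd_eq_zero_left h
    have h2 : a * (l / a) = l := Nat.mul_div_cancel' (Nat.dvd_lcm_left a b)
    rw [h1, mul_zero] at h2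
    exact hl0 h2.symm
  have key : ∀ c : ℕ, c ∣ l → g ∣ l / c → c ∣ l / g := by
    intro c hc hgc
    obtain ⟨t, ht⟩ := hgc
    have h1 : l = c * (g * t) := by rw [← ht, Nat.mul_div_cancel' hc]
    refine ⟨t, ?_⟩
    rw [h1, show c * (g * t) = g * (c * t) by ring,
      Nat.mul_div_cancel_left _ (Nat.pos_of_ne_zero hg0)]
  have hag : a ∣ l / g := key a (Nat.dvd_lcm_left a b) (Nat.gcd_dvd_left _ _)
  have hbg : b ∣ l / g := key b (Nat.dvd_lcm_right a b) (Nat.gcd_dvd_right _ _)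
  have hll : l ∣ l / g := Nat.lcm_dvd hag hbg
  have hdl : g ∣ l := (Nat.gcd_dvd_left _ _).trans (Nat.div_dvd_of_dvd (Nat.dvd_lcm_left a b))
  have hpos : 0 < l / g := Nat.div_pos (Nat.le_of_dvd (Nat.pos_of_ne_zero hl0) hdl)
    (Nat.pos_of_ne_zero hg0)
  have heq : l / g = l := le_antisymm (Nat.div_le_self _ _) (Nat.le_of_dvd hpos hll)
  exact (Nat.div_eq_self.mp heq).resolve_left hl0

lemma Ecyc_sup {a b : ℕ} (ha : a ≠ 0) (hb : b ≠ 0) :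
    Ecyc a ⊔ Ecyc b = Ecyc (Nat.lcm a b) := by
  have hl0 : Nat.lcm a b ≠ 0 := Nat.lcm_ne_zero ha hb
  apply le_antisymm
  · exact sup_le (Ecyc_mono hl0 (Nat.dvd_lcm_left a b)) (Ecyc_mono hl0 (Nat.dvd_lcm_right a b))
  · rw [Ecyc, IntermediateField.adjoin_le_iff, Set.singleton_subset_iff]
    obtain ⟨s, t, hst⟩ := Nat.isCoprime_iff_coprime.mpr (coprime_lcm_div ha hb)
    have hz := zetaC_ne_zero (Nat.lcm a b)
    have e1 : zetaC a = zetaC (Nat.lcm a b) ^ ((Nat.lcm a b / a : ℕ) : ℤ) := by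
      rw [zpow_natCast, zetaC_pow_div hl0 (Nat.dvd_lcm_left a b)]
    have e2 : zetaC b = zetaC (Nat.lcm a b) ^ ((Nat.lcm a b / b : ℕ) : ℤ) := by
      rw [zpow_natCast, zetaC_pow_div hl0 (Nat.dvd_lcm_right a b)]
    have key : zetaC (Nat.lcm a b) = zetaC a ^ s * zetaC b ^ t := by
      rw [e1, e2, ← zpow_mul, ← zpow_mul, ← zpow_add₀ hz]
      rw [show ((Nat.lcm a b / a : ℕ) : ℤ) * s + ((Nat.lcm a b / b : ℕ) : ℤ) * t = 1 by
        rw [mul_comm _ s, mul_comm _ t]; exact hst]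
      exact (zpow_one _).symm
    rw [key]
    have ma : zetaC a ∈ Ecyc a ⊔ Ecyc b := (le_sup_left : Ecyc a ≤ Ecyc a ⊔ Ecyc b) (zetaC_mem a)
    have mb : zetaC b ∈ Ecyc a ⊔ Ecyc b :=
      (le_sup_right : Ecyc b ≤ Ecyc a ⊔ Ecyc b) (zetaC_mem b)
    exact mul_mem (zpow_mem ma s) (zpow_mem mb t)

lemma totient_mul_of_dvd (d : ℕ) : ∀ n, d ∣ n → (d * n).totient = d * n.totient := by
  induction d using Nat.strong_induction_on with
  | _ d ih =>
    intro n hdn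
    rcases eq_or_ne d 0 with rfl | hd0
    · obtain rfl : n = 0 := Nat.zero_dvd.mp hdn
      simp
    rcases eq_or_ne d 1 with rfl | hd1
    · simp
    obtain ⟨p, hp, hpd⟩ := Nat.exists_prime_and_dvd hd1
    obtain ⟨d', rfl⟩ := hpd
    have hd'0 : d' ≠ 0 := by rintro rfl; simp at hd0
    have hlt : d' < p * d' := by
      have h2 := hp.two_le
      calc d' = 1 * d' := (one_mul d').symm
      _ < p * d' := by
        exact (Nat.mul_lt_mul_right (Nat.pos_of_ne_zero hd'0)).mpr (by omega)
    have hpn : p ∣ n := (dvd_mul_right p d').trans hdn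
    have hd'n : d' ∣ n := (dvd_mul_left d' p).trans hdn
    rw [show p * d' * n = p * (d' * n) by ring,
      Nat.totient_mul_of_prime_of_dvd hp (hpn.trans (dvd_mul_left n d')),
      ih d' hlt n hd'n]
    ring

lemma totient_gcd_mul_totient_lcm {a b : ℕ} (ha : a ≠ 0) :
    (Nat.gcd a b).totient * (Nat.lcm a b).totient = a.totient * b.totient := by
  have h := Nat.totient_gcd_mul_totient_mul a b
  have hgdvd : Nat.gcd a b ∣ Nat.lcm a b := (Nat.gcd_dvd_left a b).trans (Nat.dvd_lcm_left a b)
  rw [show a * b = Nat.gcd a b * Nat.lcm a b from (Nat.gcd_mul_lcm a b).symm,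
    totient_mul_of_dvd _ _ hgdvd] at h
  have hg0 : 0 < Nat.gcd a b := Nat.gcd_pos_of_pos_left _ (Nat.pos_of_ne_zero ha)
  apply Nat.eq_of_mul_eq_mul_right hg0
  calc (Nat.gcd a b).totient * (Nat.lcm a b).totient * Nat.gcd a b
      = (Nat.gcd a b).totient * (Nat.gcd a b * (Nat.lcm a b).totient) := by ring
    _ = a.totient * b.totient * Nat.gcd a b := h

lemma Ecyc_inf_le {a b : ℕ} (ha : a ≠ 0) (hb : b ≠ 0) :
    Ecyc a ⊓ Ecyc b ≤ Ecyc (Nat.gcd a b) := by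
  have hg0 : Nat.gcd a b ≠ 0 := Nat.gcd_ne_zero_left ha
  have hl0 : Nat.lcm a b ≠ 0 := Nat.lcm_ne_zero ha hb
  haveI hFDM : FiniteDimensional ℚ ↥(Ecyc a ⊓ Ecyc b) := by
    refine FiniteDimensional.of_injective
      (IntermediateField.inclusion (inf_le_left : Ecyc a ⊓ Ecyc b ≤ Ecyc a)).toLinearMap ?_
    intro x y hxy
    have h' := congrArg Subtype.val hxy
    exact Subtype.ext h'
  have hA := relfinrank_sup_Ecyc ha (Ecyc b)
  rw [Ecyc_sup ha hb] at hA
  have h1 := finrank_bot_mul_relfinrank (Ecyc_mono hl0 (Nat.dvd_lcm_right a b) :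
    Ecyc b ≤ Ecyc (Nat.lcm a b))
  have h2 := finrank_bot_mul_relfinrank (inf_le_left : Ecyc a ⊓ Ecyc b ≤ Ecyc a)
  rw [hA] at h1
  rw [finrank_Ecyc hb, finrank_Ecyc hl0] at h1
  rw [finrank_Ecyc ha] at h2
  set r := relfinrank (Ecyc a ⊓ Ecyc b) (Ecyc a)
  set m0 := Module.finrank ℚ ↥(Ecyc a ⊓ Ecyc b)
  have hml : m0 * (Nat.lcm a b).totient = (Nat.gcd a b).totient * (Nat.lcm a b).totient := by
    calc m0 * (Nat.lcm a b).totient = m0 * (b.totient * r) := by rw [h1]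
      _ = b.totient * (m0 * r) := by ring
      _ = b.totient * a.totient := by rw [h2]
      _ = (Nat.gcd a b).totient * (Nat.lcm a b).totient := by
          rw [totient_gcd_mul_totient_lcm ha]; ring
  have hm0 : m0 = (Nat.gcd a b).totient :=
    Nat.eq_of_mul_eq_mul_right (Nat.totient_pos.mpr (Nat.pos_of_ne_zero hl0)) hml
  have := IntermediateField.eq_of_le_of_finrank_le
    (le_inf (Ecyc_mono ha (Nat.gcd_dvd_left a b)) (Ecyc_mono hb (Nat.gcd_dvd_right a b)))
    (by rw [finrank_Ecyc hg0]; exact le_of_eq hm0)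
  exact this.ge

lemma mem_Dset_self {K : IntermediateField ℚ ℂ} {n : ℕ} (hn : 0 < n) : n ∈ Dset K n :=
  ⟨hn, inf_le_right⟩

lemma cK_spec (K : IntermediateField ℚ ℂ) {n : ℕ} (hn : 0 < n) :
    (∀ s ∈ Dset K n, cK K n ∣ s) ∧ 0 < cK K n ∧
      ∀ m, (∀ s ∈ Dset K n, m ∣ s) → m ∣ cK K n := by
  have hceq : cK K n = sSup {g : ℕ | ∀ s ∈ Dset K n, g ∣ s} := rfl
  set T := {g : ℕ | ∀ s ∈ Dset K n, g ∣ s} with hT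
  have h1T : (1 : ℕ) ∈ T := fun s _ => one_dvd s
  have hne : T.Nonempty := ⟨1, h1T⟩
  have hbdd : BddAbove T := ⟨n, fun g hg => Nat.le_of_dvd hn (hg n (mem_Dset_self hn))⟩
  have hmem : sSup T ∈ T := Nat.sSup_mem hne hbdd
  have hpos : 0 < sSup T := lt_of_lt_of_le Nat.one_pos (le_csSup hbdd h1T)
  rw [hceq]
  refine ⟨hmem, hpos, ?_⟩
  intro m hm
  have hm0 : 0 < m := by
    have hmn : m ∣ n := hm n (mem_Dset_self hn)
    rcases Nat.eq_zero_or_pos m with rfl | h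
    · exact absurd (Nat.zero_dvd.mp hmn) hn.ne'
    · exact h
  have hlcm : Nat.lcm m (sSup T) ∈ T := fun s hs => Nat.lcm_dvd (hm s hs) (hmem s hs)
  have h1 : Nat.lcm m (sSup T) ≤ sSup T := le_csSup hbdd hlcm
  have h2 : sSup T ≤ Nat.lcm m (sSup T) :=
    Nat.le_of_dvd (Nat.pos_of_ne_zero (Nat.lcm_ne_zero hm0.ne' hpos.ne')) (Nat.dvd_lcm_right _ _)
  have h3 : Nat.lcm m (sSup T) = sSup T := le_antisymm h1 h2
  rw [← h3]
  exact Nat.dvd_lcm_left _ _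

lemma le_of_relfinrank_eq_one {A B : IntermediateField ℚ ℂ} (h : A ≤ B)
    (h1 : relfinrank A B = 1) : B ≤ A := by
  rw [relfinrank_eq_finrank_of_le h] at h1
  have hbot : extendScalars h = ⊥ := IntermediateField.finrank_eq_one_iff.mp h1
  intro x hx
  have hx' : x ∈ extendScalars h := hx
  rw [hbot, IntermediateField.mem_bot] at hx'
  obtain ⟨a, rfl⟩ := hx'
  exact a.2

lemma dvd_div_p {m n p : ℕ} (hp : p.Prime) (hn : n ≠ 0) (hpn : p ∣ n) (hm : m ∣ n)
    (h : ¬ p ^ n.factorization p ∣ m) : m ∣ n / p := by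
  have hm0 : m ≠ 0 := by rintro rfl; exact hn (Nat.zero_dvd.mp hm)
  rw [Nat.dvd_div_iff_mul_dvd hpn]
  set v := m.factorization p with hv
  have hvlt : v < n.factorization p := by
    by_contra hc
    push_neg at hc
    exact h ((Nat.Prime.pow_dvd_iff_le_factorization hp hm0).mpr hc)
  have hsplit : p ^ v * (m / p ^ v) = m := Nat.ordProj_mul_ordCompl_eq_self m p
  have hndvd : ¬ p ∣ m / p ^ v := Nat.not_dvd_ordCompl hp hm0
  have hco : Nat.Coprime (p ^ (v + 1)) (m / p ^ v) :=
    Nat.Coprime.pow_left _ ((Nat.Prime.coprime_iff_not_dvd hp).mpr hndvd)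
  have h1 : p ^ (v + 1) ∣ n := (Nat.Prime.pow_dvd_iff_le_factorization hp hn).mpr (by omega)
  have h2 : m / p ^ v ∣ n := (Nat.ordCompl_dvd m p).trans hm
  have h3 := Nat.Coprime.mul_dvd_of_dvd_of_dvd hco h1 h2
  rwa [show p ^ (v + 1) * (m / p ^ v) = p * (p ^ v * (m / p ^ v)) by ring, hsplit] at h3

lemma not_dvd_div {c n p : ℕ} (hp : p.Prime) (hn : n ≠ 0) (hc : c ∣ n)
    (h : p ^ n.factorization p ∣ c) : ¬ p ∣ n / c := by
  intro hdvd
  have h1 : p ^ (n.factorization p + 1) ∣ n := by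
    calc p ^ (n.factorization p + 1) = p ^ n.factorization p * p := by ring
    _ ∣ c * (n / c) := mul_dvd_mul h hdvd
    _ = n := Nat.mul_div_cancel' hc
  have := (Nat.Prime.pow_dvd_iff_le_factorization hp hn).mp h1
  omega

lemma p_dvd_div {c n p : ℕ} (hc0 : 0 < c) (hpn : p ∣ n) (hc : c ∣ n / p) : p ∣ n / c := by
  obtain ⟨t, ht⟩ := hc
  have hn : n = c * (t * p) := by
    rw [← mul_assoc, ← ht, Nat.div_mul_cancel hpn]
  rw [hn, Nat.mul_div_cancel_left _ hc0]
  exact dvd_mul_left p t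

lemma relfinrank_F_E {n p : ℕ} (hp : p.Prime) (hn : 0 < n) (hpn : p ∣ n) :
    (p ^ 2 ∣ n → relfinrank (Ecyc (n / p)) (Ecyc n) = p) ∧
    (¬ p ^ 2 ∣ n → relfinrank (Ecyc (n / p)) (Ecyc n) = p - 1) := by
  have hn0 : n ≠ 0 := hn.ne'
  have hq : 0 < n / p := Nat.div_pos (Nat.le_of_dvd hn hpn) hp.pos
  have hF : Ecyc (n / p) ≤ Ecyc n := Ecyc_mono hn0 (Nat.div_dvd_of_dvd hpn)
  have h2 := finrank_bot_mul_relfinrank hF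
  rw [finrank_Ecyc hq.ne', finrank_Ecyc hn0] at h2
  have hpos := Nat.totient_pos.mpr hq
  constructor
  · intro hsq
    have hpd : p ∣ n / p := by
      obtain ⟨t, ht⟩ := hsq
      refine ⟨t, ?_⟩
      rw [ht, pow_two, mul_assoc, Nat.mul_div_cancel_left _ hp.pos]
    have htot : n.totient = p * (n / p).totient := by
      conv_lhs => rw [← Nat.mul_div_cancel' hpn]
      exact Nat.totient_mul_of_prime_of_dvd hp hpd
    apply Nat.eq_of_mul_eq_mul_left hpos
    rw [h2, htot]
    ring
  · intro hsq
    have hpd : ¬ p ∣ n / p := by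
      intro hd
      obtain ⟨t, ht⟩ := hd
      exact hsq ⟨t, by rw [pow_two, ← Nat.mul_div_cancel' hpn, ht]; ring⟩
    have htot : n.totient = (p - 1) * (n / p).totient := by
      conv_lhs => rw [← Nat.mul_div_cancel' hpn]
      exact Nat.totient_mul_of_prime_of_not_dvd hp hpd
    apply Nat.eq_of_mul_eq_mul_left hpos
    rw [h2, htot]
    ring

end Aux

/-- For a subfield `K` of the algebraic numbers, `n ∈ ℕ` and a prime `p ∣ n`:
`[E_n K : E_{n/p} K] = p` if and only if `p² ∣ n` and `p ∣ n / c_K(n)`. -/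
theorem stmt_3 (K : IntermediateField ℚ ℂ) (hK : ∀ x ∈ K, IsAlgebraic ℚ x)
    (n p : ℕ) (hn : 0 < n) (hp : p.Prime) (hpn : p ∣ n) :
    relDeg (Ecyc n) (Ecyc (n / p) ⊔ K) = p ↔ p ^ 2 ∣ n ∧ p ∣ n / cK K n := by
  have hn0 : n ≠ 0 := hn.ne'
  have hq : 0 < n / p := Nat.div_pos (Nat.le_of_dvd hn hpn) hp.pos
  set E := Ecyc n with hE
  set F := Ecyc (n / p) with hF
  have hFE : F ≤ E := Ecyc_mono hn0 (Nat.div_dvd_of_dvd hpn)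
  set L := F ⊔ K with hL
  have hEL : E ⊔ L = E ⊔ K := by rw [hL, ← sup_assoc, sup_eq_left.mpr hFE]
  have hm : relDeg E L = relfinrank L (E ⊔ K) := by rw [relDeg_eq_relfinrank, hEL]
  obtain hP2 := relfinrank_F_E hp hn hpn
  have case_a : K ⊓ E ≤ F → relDeg E L = relfinrank F E := by
    intro h
    have hEK : E ⊓ K ≤ F := by rwa [inf_comm]
    have htower := relfinrank_mul_relfinrank (le_sup_right : K ≤ L)
      (sup_le (hFE.trans le_sup_left) le_sup_right : L ≤ E ⊔ K)
    have hA1 : relfinrank K (E ⊔ K) = relfinrank (E ⊓ K) E := relfinrank_sup_Ecyc hn0 K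
    have hA2 : relfinrank K L = relfinrank (F ⊓ K) F := by
      rw [hL]; exact relfinrank_sup_Ecyc hq.ne' K
    have hFK : F ⊓ K = E ⊓ K :=
      le_antisymm (le_inf (inf_le_left.trans hFE) inf_le_right)
        (le_inf hEK inf_le_right)
    have htower2 := relfinrank_mul_relfinrank hEK hFE
    have hpos : 0 < relfinrank K L := by
      rw [hL, hF]
      rw [show Ecyc (n / p) ⊔ K = IntermediateField.adjoin ℚ {zetaC (n / p)} ⊔ K from rfl]
      rw [relfinrank_sup_adjoin _ (zetaC_integral (n / p)) K]
      exact minpoly.natDegree_pos (zetaC_integral (n / p)).tower_top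
    apply Nat.eq_of_mul_eq_mul_left hpos
    calc relfinrank K L * relDeg E L = relfinrank K (E ⊔ K) := by rw [hm]; exact htower
      _ = relfinrank (E ⊓ K) E := hA1
      _ = relfinrank (E ⊓ K) F * relfinrank F E := htower2.symm
      _ = relfinrank K L * relfinrank F E := by rw [hA2, hFK]
  have hmM : relDeg E L = relfinrank (E ⊓ L) E := by
    rw [relDeg_eq_relfinrank]
    exact relfinrank_sup_Ecyc hn0 L
  have hFM : F ≤ E ⊓ L := le_inf hFE le_sup_left
  have htwM := relfinrank_mul_relfinrank hFM (inf_le_left : E ⊓ L ≤ E)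
  have case_b : ¬ K ⊓ E ≤ F → p ^ 2 ∣ n → relDeg E L ≠ p := by
    intro hnot hsq hmp
    rw [hmM] at hmp
    rw [hmp, hP2.1 hsq] at htwM
    have h1 : relfinrank F (E ⊓ L) = 1 :=
      Nat.eq_of_mul_eq_mul_right hp.pos (by rw [one_mul]; exact htwM)
    have hMF : E ⊓ L ≤ F := le_of_relfinrank_eq_one hFM h1
    exact hnot ((le_inf (inf_le_right : K ⊓ E ≤ E)
      ((inf_le_left : K ⊓ E ≤ K).trans le_sup_right)).trans hMF)
  have case_c : ¬ p ^ 2 ∣ n → relDeg E L ≠ p := by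
    intro hsq hmp
    have hdvd : relDeg E L ∣ p - 1 := by
      refine ⟨relfinrank F (E ⊓ L), ?_⟩
      rw [← hP2.2 hsq, ← htwM, hmM]
      ring
    have hple : relDeg E L ≤ p - 1 := Nat.le_of_dvd (by have := hp.two_le; omega) hdvd
    have := hp.two_le
    omega
  constructor
  · intro hmp
    have hsq : p ^ 2 ∣ n := by
      by_contra hnsq
      exact case_c hnsq hmp
    have hKE : K ⊓ E ≤ F := by
      by_contra hnot
      exact case_b hnot hsq hmp
    refine ⟨hsq, ?_⟩
    have hmemS : n / p ∈ Dset K n := ⟨hq, hKE⟩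
    have hcd : cK K n ∣ n / p := (cK_spec K hn).1 _ hmemS
    exact p_dvd_div (cK_spec K hn).2.1 hpn hcd
  · rintro ⟨hsq, hpc⟩
    have hc := cK_spec K hn
    have hcn : cK K n ∣ n := hc.1 n (mem_Dset_self hn)
    have hex : ∃ d ∈ Dset K n, ¬ p ^ n.factorization p ∣ d := by
      by_contra hno
      push_neg at hno
      have := hc.2.2 _ hno
      exact not_dvd_div hp hn0 hcn this hpc
    obtain ⟨d, hdS, hdk⟩ := hex
    have hKE : K ⊓ E ≤ F := by
      have h1 : K ⊓ E ≤ Ecyc d ⊓ E := le_inf hdS.2 inf_le_right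
      have h2 : Ecyc d ⊓ E ≤ Ecyc (Nat.gcd d n) := Ecyc_inf_le hdS.1.ne' hn0
      have hgd : Nat.gcd d n ∣ n / p := dvd_div_p hp hn0 hpn (Nat.gcd_dvd_right d n)
        (fun hdvd => hdk (hdvd.trans (Nat.gcd_dvd_left d n)))
      have h3 : Ecyc (Nat.gcd d n) ≤ F := Ecyc_mono hq.ne' hgd
      exact (h1.trans h2).trans h3
    rw [case_a hKE]
    exact hP2.1 hsq
end

section
/- Let m₁, m₂ ∈ ℕ both be odd (and coprime to 2). Then ord(2 mod m₁m₂) ≡ ord(2 mod m₁) · ord(2 mod m₂) (mod 2); that is, the multiplicative order of 2 in (ℤ/m₁m₂ℤ)^× is even if and only if the multiplicative order of 2 in (ℤ/m₁ℤ)^× is even or the multiplicative order of 2 in (ℤ/m₂ℤ)^× is even. -/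
lemma liftA (a : ℤ) (n : ℤ) (p : ℕ) (hpn : (p:ℤ) ∣ n)
    (h : a ≡ 1 [ZMOD n]) : a ^ p ≡ 1 [ZMOD n * p] := by
  have hd : n ∣ a - 1 := dvd_sub_comm.mp h.dvd
  set S : ℤ := ∑ i ∈ Finset.range p, a ^ i with hSdef
  have hgeo : S * (a - 1) = a ^ p - 1 := geom_sum_mul a p
  have hSn : n ∣ S - p := by
    have : S - p = ∑ i ∈ Finset.range p, (a ^ i - 1) := by
      rw [Finset.sum_sub_distrib]; simp [hSdef]
    rw [this]
    refine Finset.dvd_sum fun i _ => hd.trans ?_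
    simpa using sub_dvd_pow_sub_pow a 1 i
  have hSp : (p:ℤ) ∣ S := by
    have h2 : (p:ℤ) ∣ S - p := hpn.trans hSn
    simpa using h2.add (dvd_refl (p:ℤ))
  have : n * p ∣ a ^ p - 1 := by
    rw [← hgeo]; exact mul_comm (a-1) S ▸ mul_dvd_mul hd hSp
  exact (Int.modEq_iff_dvd.mpr this).symm

lemma liftB (a : ℤ) : ∀ g : ℕ, ∀ n : ℤ, ∀ k : ℕ, 0 < g → (g:ℤ) ∣ n →
    a ^ k ≡ 1 [ZMOD n] → a ^ (k * g) ≡ 1 [ZMOD n * g] := by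
  intro g
  induction g using Nat.strong_induction_on with
  | _ g ih =>
    intro n k hg hgn h
    rcases eq_or_ne g 1 with rfl | hne
    · simpa using h
    · obtain ⟨p, hp, hpg⟩ := Nat.exists_prime_and_dvd hne
      obtain ⟨g', rfl⟩ := hpg
      have hg' : 0 < g' := Nat.pos_of_mul_pos_left (by rwa [mul_comm] at hg)
      have hplt : g' < p * g' := by
        have := hp.one_lt; nlinarith
      have hpn : (p:ℤ) ∣ n := (Int.natCast_dvd_natCast.mpr (dvd_mul_right p g') |>.trans hgn)
      have step : a ^ (k * p) ≡ 1 [ZMOD n * p] := by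
        rw [pow_mul]; exact liftA (a ^ k) n p hpn h
      have hg'np : (g':ℤ) ∣ n * p := by
        exact dvd_mul_of_dvd_left ((Int.natCast_dvd_natCast.mpr (dvd_mul_left g' p)).trans hgn) p
      have := ih g' hplt (n * p) (k * p) hg' hg'np step
      have e1 : k * p * g' = k * (p * g') := by ring
      have e2 : n * p * g' = n * (p * g') := by ring
      rwa [e1, e2] at this

lemma ord_dvd_iff {n : ℕ} [NeZero n] (h : Nat.Coprime 2 n) (j : ℕ) :
    orderOf (ZMod.unitOfCoprime 2 h) ∣ j ↔ 2 ^ j ≡ 1 [MOD n] := by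
  rw [orderOf_dvd_iff_pow_eq_one, Units.ext_iff]
  push_cast [ZMod.coe_unitOfCoprime]
  rw [show ((2 : ZMod n) : ZMod n) ^ j = (((2 ^ j : ℕ) : ZMod n)) by push_cast; ring,
    show (1 : ZMod n) = ((1 : ℕ) : ZMod n) by push_cast; ring,
    ZMod.natCast_eq_natCast_iff]

/-- For odd `m₁, m₂`: the multiplicative order of `2` modulo `m₁·m₂` is
congruent mod `2` to the product of the multiplicative orders of `2` modulo `m₁` and modulo
`m₂`; that is, `ord(2 mod m₁m₂)` is even iff `ord(2 mod m₁)` is even or `ord(2 mod m₂)` is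
even. -/
theorem stmt_18 (m₁ m₂ : ℕ) (h₁ : Odd m₁) (h₂ : Odd m₂)
    (hc₁ : Nat.Coprime 2 m₁) (hc₂ : Nat.Coprime 2 m₂) :
    orderOf (ZMod.unitOfCoprime 2 (hc₁.mul_right hc₂)) ≡
      orderOf (ZMod.unitOfCoprime 2 hc₁) * orderOf (ZMod.unitOfCoprime 2 hc₂) [MOD 2] ∧
    (Even (orderOf (ZMod.unitOfCoprime 2 (hc₁.mul_right hc₂))) ↔
      Even (orderOf (ZMod.unitOfCoprime 2 hc₁)) ∨
        Even (orderOf (ZMod.unitOfCoprime 2 hc₂))) := by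
  have hm₁ : 0 < m₁ := h₁.pos
  have hm₂ : 0 < m₂ := h₂.pos
  haveI : NeZero m₁ := ⟨hm₁.ne'⟩
  haveI : NeZero m₂ := ⟨hm₂.ne'⟩
  haveI : NeZero (m₁ * m₂) := ⟨(Nat.mul_pos hm₁ hm₂).ne'⟩
  set o₁ := orderOf (ZMod.unitOfCoprime 2 hc₁) with ho₁
  set o₂ := orderOf (ZMod.unitOfCoprime 2 hc₂) with ho₂
  set o := orderOf (ZMod.unitOfCoprime 2 (hc₁.mul_right hc₂)) with ho
  -- o₁ ∣ o and o₂ ∣ o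
  have hself : 2 ^ o ≡ 1 [MOD m₁ * m₂] := (ord_dvd_iff _ o).mp dvd_rfl
  have hd₁ : o₁ ∣ o := (ord_dvd_iff hc₁ o).mpr (hself.of_dvd (dvd_mul_right m₁ m₂))
  have hd₂ : o₂ ∣ o := (ord_dvd_iff hc₂ o).mpr (hself.of_dvd (dvd_mul_left m₂ m₁))
  -- o divides lcm(o₁,o₂) * gcd(m₁,m₂)
  set k := Nat.lcm o₁ o₂ with hk
  set g := Nat.gcd m₁ m₂ with hg
  set L := Nat.lcm m₁ m₂ with hL
  have hgpos : 0 < g := Nat.gcd_pos_of_pos_left _ hm₁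
  have hk₁ : 2 ^ k ≡ 1 [MOD m₁] := (ord_dvd_iff hc₁ k).mp (Nat.dvd_lcm_left _ _)
  have hk₂ : 2 ^ k ≡ 1 [MOD m₂] := (ord_dvd_iff hc₂ k).mp (Nat.dvd_lcm_right _ _)
  have hkL : ((2:ℤ)) ^ k ≡ 1 [ZMOD (L:ℤ)] := by
    have d1 : (m₁:ℤ) ∣ 2 ^ k - 1 := by
      have := (Int.natCast_modEq_iff.mpr hk₁).dvd
      push_cast at this ⊢
      exact dvd_sub_comm.mp this
    have d2 : (m₂:ℤ) ∣ 2 ^ k - 1 := by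
      have := (Int.natCast_modEq_iff.mpr hk₂).dvd
      push_cast at this ⊢
      exact dvd_sub_comm.mp this
    have : (L:ℤ) ∣ 2 ^ k - 1 := by
      have := Int.dvd_natAbs.mp (Int.natCast_dvd_natCast.mpr
        (Int.lcm_dvd (Int.dvd_natAbs.mpr d1) (Int.dvd_natAbs.mpr d2)))
      rwa [Int.lcm, Int.natAbs_natCast, Int.natAbs_natCast] at this
    exact (Int.modEq_iff_dvd.mpr this).symm
  -- apply lifting
  have hgL : (g:ℤ) ∣ (L:ℤ) :=
    Int.natCast_dvd_natCast.mpr ((Nat.gcd_dvd_left m₁ m₂).trans (Nat.dvd_lcm_left m₁ m₂))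
  have hlift : (2:ℤ) ^ (k * g) ≡ 1 [ZMOD ((L:ℤ) * g)] := liftB 2 g L k hgpos hgL hkL
  have hmulN : L * g = m₁ * m₂ := by rw [mul_comm]; exact Nat.gcd_mul_lcm m₁ m₂
  have hokg : o ∣ k * g := by
    rw [ord_dvd_iff, ← Int.natCast_modEq_iff]
    push_cast
    have hmul : (m₁:ℤ) * m₂ = (L:ℤ) * g := by exact_mod_cast hmulN.symm
    rwa [hmul]
  -- parity
  have odd_of_dvd : ∀ {a b : ℕ}, a ∣ b → Odd b → Odd a := by
    intro a b hab hb
    rw [← Nat.not_even_iff_odd, even_iff_two_dvd] at hb ⊢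
    exact fun h2 => hb (h2.trans hab)
  have hgodd : Odd g := odd_of_dvd (Nat.gcd_dvd_left m₁ m₂) h₁
  have key : Even o ↔ Even o₁ ∨ Even o₂ := by
    constructor
    · intro he
      by_contra hcon
      push_neg at hcon
      have hko : Odd k := by
        have : k ∣ o₁ * o₂ := Nat.lcm_dvd (dvd_mul_right _ _) (dvd_mul_left _ _)
        exact odd_of_dvd this (((Nat.not_even_iff_odd).mp hcon.1).mul
          ((Nat.not_even_iff_odd).mp hcon.2))
      have : Odd o := odd_of_dvd hokg (hko.mul hgodd)
      exact (Nat.not_even_iff_odd.mpr this) he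
    · rintro (h | h)
      · rw [even_iff_two_dvd] at h ⊢; exact h.trans hd₁
      · rw [even_iff_two_dvd] at h ⊢; exact h.trans hd₂
  refine ⟨?_, key⟩
  have hmulpar : Even (o₁ * o₂) ↔ Even o₁ ∨ Even o₂ := Nat.even_mul
  have := key
  simp only [Nat.even_iff] at this hmulpar
  unfold Nat.ModEq
  omega
end
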